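/- For each σ ∈ (0,1], the function p_σ(y) = σ·√(1-y²)/y is a subsolution on (0,1) of the Riccati equation (1/n) q'(y) + q(y)² + q(y)/(n y) + 1 - 1/y² = 0, i.e. (1/n) p_σ'(y) + p_σ(y)² + p_σ(y)/(n y) + 1 - 1/y² ≤ 0 for all y ∈ (0,1), for every integer n ≥ 1. -/

import Mathlib

theorem riccati_subsolution_J (n : ℕ) (hn : 1 ≤ n) (σ : ℝ) (hσ : σ ∈ Set.Ioc (0:ℝ) 1) :
    ∀ y ∈ Set.Ioo (0:ℝ) 1,
      (1 / (n : ℝ)) * deriv (fun z : ℝ => σ * Real.sqrt (1 - z ^ 2) / z) y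
        + (σ * Real.sqrt (1 - y ^ 2) / y) ^ 2
        + (σ * Real.sqrt (1 - y ^ 2) / y) / ((n : ℝ) * y) + 1 - 1 / y ^ 2 ≤ 0 := by
  obtain ⟨hσ0, hσ1⟩ := hσ
  intro y ⟨hy0, hy1⟩
  have hN : (1:ℝ) ≤ (n:ℝ) := by exact_mod_cast hn
  have hN0 : (0:ℝ) < (n:ℝ) := by linarith
  set s := Real.sqrt (1 - y ^ 2) with hs
  have h1y2 : 0 < 1 - y ^ 2 := by nlinarith
  have hs2 : s ^ 2 = 1 - y ^ 2 := Real.sq_sqrt h1y2.le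
  have hs_pos : 0 < s := Real.sqrt_pos.mpr h1y2
  -- derivative computation
  have h1 : HasDerivAt (fun z : ℝ => 1 - z ^ 2) (-(2 * y)) y := by
    simpa using ((hasDerivAt_pow 2 y).const_sub 1)
  have h2 : HasDerivAt (fun z : ℝ => Real.sqrt (1 - z ^ 2))
      (1 / (2 * s) * (-(2 * y))) y := by
    exact (Real.hasDerivAt_sqrt (by nlinarith)).comp y h1
  have h3 : HasDerivAt (fun z : ℝ => σ * Real.sqrt (1 - z ^ 2) / z)
      ((σ * (1 / (2 * s) * (-(2 * y))) * y - σ * s * 1) / y ^ 2) y :=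
    ((h2.const_mul σ).div (hasDerivAt_id y) hy0.ne')
  have hderiv : deriv (fun z : ℝ => σ * Real.sqrt (1 - z ^ 2) / z) y
      = -σ / (y ^ 2 * s) := by
    rw [h3.deriv]
    field_simp
    linear_combination (-1 : ℝ) * hs2
  rw [hderiv]
  have hA : 1 / (n:ℝ) * (-σ / (y ^ 2 * s)) + σ * s / y / ((n:ℝ) * y)
      = σ * (s ^ 2 - 1) / ((n:ℝ) * y ^ 2 * s) := by
    field_simp
    ring
  have hA2 : σ * (s ^ 2 - 1) / ((n:ℝ) * y ^ 2 * s) = -σ / ((n:ℝ) * s) := by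
    rw [hs2]
    field_simp
    ring
  have t1 : -σ / ((n:ℝ) * s) ≤ 0 :=
    div_nonpos_of_nonpos_of_nonneg (by linarith) (by positivity)
  have hB : (σ * s / y) ^ 2 + 1 - 1 / y ^ 2 ≤ 0 := by
    have e1 : (σ * s / y) ^ 2 = σ ^ 2 * (1 - y ^ 2) / y ^ 2 := by
      rw [div_pow, mul_pow, hs2]
    rw [e1]
    rw [div_add' _ _ _ (by positivity), div_sub_div _ _ (by positivity) (by positivity)]
    apply div_nonpos_of_nonpos_of_nonneg _ (by positivity)
    nlinarith [mul_nonneg (mul_nonneg (by nlinarith : (0:ℝ) ≤ 1 - σ ^ 2) h1y2.le) (sq_nonneg y)]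
  linarith [hA.trans hA2]
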